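/- Let q be a positive integer and for each divisor q' of q let Ê^q_{q'} ⊂ L²₀(SL₂(ℤ/qℤ)) be the subspace of functions invariant under the left action of the kernel of SL₂(ℤ/qℤ) → SL₂(ℤ/q'ℤ). Define E^q_{q'} = Ê^q_{q'} ∩ (⊕_{q''|q', q''≠q'} Ê^q_{q''})^⊥. Then for square-free q, L²₀(SL₂(ℤ/qℤ)) decomposes as the orthogonal direct sum ⊕_{1 ≠ q' | q} E^q_{q'}. -/

import Mathlib

open Matrix

/-- Functions on `SL₂(ℤ/qℤ)`. -/
abbrev SL2Mod (q : ℕ) := SpecialLinearGroup (Fin 2) (ZMod q)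

/-- The standard Hermitian inner product on functions on `SL₂(ℤ/qℤ)`. -/
noncomputable def innerSL2 (q : ℕ) [NeZero q] (φ ψ : SL2Mod q → ℂ) : ℂ :=
  ∑ g : SL2Mod q, (starRingEnd ℂ) (φ g) * ψ g

/-- `Ê^q_{d}`: functions in `L²₀(SL₂(ℤ/qℤ))` invariant under the left action of
the kernel of the reduction `SL₂(ℤ/qℤ) → SL₂(ℤ/dℤ)`. -/
def EhatSL2 (q d : ℕ) [NeZero q] (h : d ∣ q) : Set (SL2Mod q → ℂ) :=
  {φ | (∑ g : SL2Mod q, φ g = 0) ∧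
    ∀ γ : SL2Mod q, SpecialLinearGroup.map (ZMod.castHom h (ZMod d)) γ = 1 →
      ∀ g : SL2Mod q, φ (γ⁻¹ * g) = φ g}

/-- `E^q_{d}`: the "new" functions at level `d`, i.e. elements of `Ê^q_d`
orthogonal to `Ê^q_{d'}` for every proper divisor `d'` of `d`. -/
noncomputable def EnewSL2 (q d : ℕ) [NeZero q] (h : d ∣ q) : Set (SL2Mod q → ℂ) :=
  {φ | φ ∈ EhatSL2 q d h ∧
    ∀ (d' : ℕ) (h' : d' ∣ d), d' ≠ d →
      ∀ ψ ∈ EhatSL2 q d' (h'.trans h), innerSL2 q φ ψ = 0}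

lemma zmod_crt_exists {q a c : ℕ} [NeZero q] (hq : q = a * c) (hco : a.Coprime c)
    (ha : a ∣ q) (hc : c ∣ q) (s : ZMod a) (t : ZMod c) :
    ∃ x : ZMod q, ZMod.castHom ha (ZMod a) x = s ∧ ZMod.castHom hc (ZMod c) x = t := by
  have ha' : NeZero a := ⟨fun h => (NeZero.ne q) (by simp [hq, h])⟩
  have hc' : NeZero c := ⟨fun h => (NeZero.ne q) (by simp [hq, h])⟩
  obtain ⟨k, hk1, hk2⟩ := Nat.chineseRemainder hco.symm t.val s.val
  refine ⟨(k : ZMod q), ?_, ?_⟩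
  · rw [map_natCast]
    have : (k : ZMod a) = (s.val : ZMod a) := (ZMod.natCast_eq_natCast_iff _ _ _).mpr hk2
    rw [this, ZMod.natCast_val, ZMod.cast_id]
  · rw [map_natCast]
    have : (k : ZMod c) = (t.val : ZMod c) := (ZMod.natCast_eq_natCast_iff _ _ _).mpr hk1
    rw [this, ZMod.natCast_val, ZMod.cast_id]

lemma zmod_crt_inj {q a c : ℕ} [NeZero q] (hq : q = a * c) (hco : a.Coprime c)
    (ha : a ∣ q) (hc : c ∣ q) {x y : ZMod q}
    (h1 : ZMod.castHom ha (ZMod a) x = ZMod.castHom ha (ZMod a) y)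
    (h2 : ZMod.castHom hc (ZMod c) x = ZMod.castHom hc (ZMod c) y) : x = y := by
  have e1 : x.val ≡ y.val [MOD a] := by
    rw [← ZMod.natCast_eq_natCast_iff]
    have hxa : ((x.val : ℕ) : ZMod a) = ZMod.castHom ha (ZMod a) x := by
      rw [ZMod.natCast_val]; rfl
    have hya : ((y.val : ℕ) : ZMod a) = ZMod.castHom ha (ZMod a) y := by
      rw [ZMod.natCast_val]; rfl
    rw [hxa, hya, h1]
  have e2 : x.val ≡ y.val [MOD c] := by
    rw [← ZMod.natCast_eq_natCast_iff]
    have hxa : ((x.val : ℕ) : ZMod c) = ZMod.castHom hc (ZMod c) x := by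
      rw [ZMod.natCast_val]; rfl
    have hya : ((y.val : ℕ) : ZMod c) = ZMod.castHom hc (ZMod c) y := by
      rw [ZMod.natCast_val]; rfl
    rw [hxa, hya, h2]
  have hm : x.val ≡ y.val [MOD q] := by
    have := (Nat.modEq_and_modEq_iff_modEq_mul hco).mp ⟨e1, e2⟩
    rwa [← hq] at this
  calc x = (x.val : ZMod q) := by rw [ZMod.natCast_val, ZMod.cast_id]
    _ = (y.val : ZMod q) := (ZMod.natCast_eq_natCast_iff _ _ _).mpr hm
    _ = y := by rw [ZMod.natCast_val, ZMod.cast_id]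

lemma sq_coprime {q a : ℕ} (hsf : Squarefree q) (ha : a ∣ q) :
    a.Coprime (q / a) := by
  have hq' : q = a * (q / a) := (Nat.mul_div_cancel' ha).symm
  have hdd := mul_dvd_mul (Nat.gcd_dvd_left a (q / a)) (Nat.gcd_dvd_right a (q / a))
  rw [← hq'] at hdd
  exact Nat.isUnit_iff.mp (hsf _ hdd)

-- b = gcd(b,a) * gcd(b,c) when q = a*c, coprime, b ∣ q
lemma gcd_mul_gcd {a c b : ℕ} (hco : a.Coprime c) (hb : b ∣ a * c) :
    b = b.gcd a * b.gcd c := by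
  obtain ⟨u, v, hu, hv, huv⟩ := Nat.dvd_mul.mp hb
  have huv' : u * v ∣ b.gcd a * b.gcd c := by
    refine mul_dvd_mul ?_ ?_
    · exact Nat.dvd_gcd (huv ▸ Dvd.intro v rfl) hu
    · exact Nat.dvd_gcd (huv ▸ Dvd.intro_left u rfl) hv
  have h2 : b.gcd a * b.gcd c ∣ b := by
    have hcop : (b.gcd a).Coprime (b.gcd c) :=
      Nat.Coprime.coprime_dvd_left (Nat.gcd_dvd_right _ _)
        (Nat.Coprime.coprime_dvd_right (Nat.gcd_dvd_right _ _) hco)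
    exact hcop.mul_dvd_of_dvd_of_dvd (Nat.gcd_dvd_left _ _) (Nat.gcd_dvd_left _ _)
  exact Nat.dvd_antisymm (huv ▸ huv') h2

lemma map_one_iff {q d : ℕ} [NeZero q] (h : d ∣ q) (γ : SL2Mod q) :
    SpecialLinearGroup.map (ZMod.castHom h (ZMod d)) γ = 1 ↔
      ∀ i j, ZMod.castHom h (ZMod d) (γ i j) = (1 : Matrix (Fin 2) (Fin 2) (ZMod d)) i j := by
  constructor
  · intro hγ i j
    have := congrArg (fun m : SL2Mod d => (m : Matrix (Fin 2) (Fin 2) (ZMod d)) i j) hγ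
    simpa [SpecialLinearGroup.map_apply_coe] using this
  · intro hij
    ext i j
    simpa [SpecialLinearGroup.map_apply_coe] using hij i j

lemma cast_chain {q m n : ℕ} (h1 : n ∣ m) (h2 : m ∣ q) (h3 : n ∣ q) (z : ZMod q) :
    ZMod.castHom h1 (ZMod n) (ZMod.castHom h2 (ZMod m) z) = ZMod.castHom h3 (ZMod n) z :=
  DFunLike.congr_fun (ZMod.castHom_comp h1 h2) z

/-- Key group-theoretic factorization relying on squarefreeness. -/
lemma kernel_factorization {q : ℕ} [NeZero q] (hsf : Squarefree q) {a b : ℕ}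
    (ha : a ∣ q) (hb : b ∣ q) (γ : SL2Mod q)
    (hγ : SpecialLinearGroup.map (ZMod.castHom ((Nat.gcd_dvd_left a b).trans ha) (ZMod (a.gcd b))) γ = 1) :
    ∃ α β : SL2Mod q,
      SpecialLinearGroup.map (ZMod.castHom ha (ZMod a)) α = 1 ∧
      SpecialLinearGroup.map (ZMod.castHom hb (ZMod b)) β = 1 ∧ γ = α * β := by
  set c := q / a with hc
  have hq' : q = a * c := (Nat.mul_div_cancel' ha).symm
  have hco : a.Coprime c := sq_coprime hsf ha
  have hcq : c ∣ q := Nat.div_dvd_of_dvd ha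
  -- build entries of α by CRT
  have hx : ∀ i j : Fin 2, ∃ x : ZMod q,
      ZMod.castHom ha (ZMod a) x = (1 : Matrix (Fin 2) (Fin 2) (ZMod a)) i j ∧
      ZMod.castHom hcq (ZMod c) x = ZMod.castHom hcq (ZMod c) (γ i j) := by
    intro i j
    exact zmod_crt_exists hq' hco ha hcq
      ((1 : Matrix (Fin 2) (Fin 2) (ZMod a)) i j)
      (ZMod.castHom hcq (ZMod c) (γ i j))
  choose x hx1 hx2 using hx
  set M : Matrix (Fin 2) (Fin 2) (ZMod q) := Matrix.of x with hM
  have hx1' : ∀ i j, ZMod.castHom ha (ZMod a) (M i j) = (1 : Matrix (Fin 2) (Fin 2) (ZMod a)) i j := hx1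
  have hx2' : ∀ i j, ZMod.castHom hcq (ZMod c) (M i j) = ZMod.castHom hcq (ZMod c) (γ i j) := hx2
  have hMa : M.map (ZMod.castHom ha (ZMod a)) = 1 := by
    ext i j; simpa [hM] using hx1 i j
  have hMc : M.map (ZMod.castHom hcq (ZMod c)) = (γ : Matrix (Fin 2) (Fin 2) (ZMod q)).map (ZMod.castHom hcq (ZMod c)) := by
    ext i j; simpa [hM] using hx2 i j
  have hdet : M.det = 1 := by
    apply zmod_crt_inj hq' hco ha hcq
    · rw [RingHom.map_det, RingHom.mapMatrix_apply, hMa, Matrix.det_one, _root_.map_one]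
    · rw [RingHom.map_det, RingHom.mapMatrix_apply, hMc, ← RingHom.mapMatrix_apply,
        ← RingHom.map_det, γ.prop]
  have hbab : b = a.gcd b * b.gcd c := by
    rw [Nat.gcd_comm a b]; exact gcd_mul_gcd hco (hq' ▸ hb)
  have hcop' : (a.gcd b).Coprime (b.gcd c) := by
    rw [Nat.gcd_comm a b]
    exact Nat.Coprime.coprime_dvd_left (Nat.gcd_dvd_right _ _)
      (Nat.Coprime.coprime_dvd_right (Nat.gcd_dvd_right _ _) hco)
  have hbne : NeZero b := ⟨fun h => NeZero.ne q (Nat.eq_zero_of_zero_dvd (h ▸ hb))⟩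
  have hba : a.gcd b ∣ b := Nat.gcd_dvd_right a b
  have hbc : b.gcd c ∣ b := Nat.gcd_dvd_left b c
  have hga : a.gcd b ∣ a := Nat.gcd_dvd_left a b
  have hvc : b.gcd c ∣ c := Nat.gcd_dvd_right b c
  refine ⟨(@id (SL2Mod q) ⟨M, hdet⟩), (@id (SL2Mod q) ⟨M, hdet⟩)⁻¹ * γ, ?_, ?_, by group⟩
  · ext i j
    show ZMod.castHom ha (ZMod a) (M i j) = (1 : Matrix (Fin 2) (Fin 2) (ZMod a)) i j
    exact hx1' i j
  · have hmapeq : SpecialLinearGroup.map (ZMod.castHom hb (ZMod b)) (@id (SL2Mod q) ⟨M, hdet⟩) =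
        SpecialLinearGroup.map (ZMod.castHom hb (ZMod b)) γ := by
      ext i j
      show ZMod.castHom hb (ZMod b) (M i j) = ZMod.castHom hb (ZMod b) (γ i j)
      apply zmod_crt_inj hbab hcop' hba hbc
      · rw [cast_chain hba hb ((Nat.gcd_dvd_left a b).trans ha) (M i j),
          cast_chain hba hb ((Nat.gcd_dvd_left a b).trans ha) (γ i j),
          ← cast_chain hga ha ((Nat.gcd_dvd_left a b).trans ha) (M i j), hx1' i j]
        have := (map_one_iff ((Nat.gcd_dvd_left a b).trans ha) γ).mp hγ i j
        rw [this]
        by_cases hij : i = j <;> simp [hij, Matrix.one_apply, ZMod.cast_one hga]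
      · rw [cast_chain hbc hb (hvc.trans hcq) (M i j),
          cast_chain hbc hb (hvc.trans hcq) (γ i j),
          ← cast_chain hvc hcq (hvc.trans hcq) (M i j),
          ← cast_chain hvc hcq (hvc.trans hcq) (γ i j), hx2' i j]
    rw [_root_.map_mul, _root_.map_inv, hmapeq, inv_mul_cancel]

section avg
variable {q : ℕ} [NeZero q]

noncomputable def kerF (q : ℕ) [NeZero q] (a : ℕ) (ha : a ∣ q) : Finset (SL2Mod q) := by
  classical
  exact Finset.univ.filter (fun k => SpecialLinearGroup.map (ZMod.castHom ha (ZMod a)) k = 1)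

lemma mem_kerF {a : ℕ} (ha : a ∣ q) {k : SL2Mod q} :
    k ∈ kerF q a ha ↔ SpecialLinearGroup.map (ZMod.castHom ha (ZMod a)) k = 1 := by
  classical
  simp [kerF]

lemma kerF_card_ne_zero {a : ℕ} (ha : a ∣ q) : (kerF q a ha).card ≠ 0 := by
  have : (1 : SL2Mod q) ∈ kerF q a ha := (mem_kerF ha).mpr (map_one _)
  exact Finset.card_ne_zero_of_mem this

lemma avg_mem {a b : ℕ} (hsf : Squarefree q) (ha : a ∣ q) (hb : b ∣ q)
    {ψ : SL2Mod q → ℂ} (hψ : ψ ∈ EhatSL2 q b hb) :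
    (fun g => ∑ k ∈ kerF q a ha, ψ (k⁻¹ * g)) ∈
      EhatSL2 q (a.gcd b) ((Nat.gcd_dvd_left a b).trans ha) := by
  constructor
  · rw [Finset.sum_comm]
    refine Finset.sum_eq_zero fun k _ => ?_
    exact (Fintype.sum_equiv (Equiv.mulLeft k⁻¹) _ ψ (fun x => rfl)).trans hψ.1
  · intro γ hγ g
    obtain ⟨α, β, hα, hβ, hγab⟩ := kernel_factorization hsf ha hb γ hγ
    have step1 : ∀ k ∈ kerF q a ha, ψ (k⁻¹ * (γ⁻¹ * g)) = ψ ((α * k)⁻¹ * g) := by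
      intro k _
      have hδ : SpecialLinearGroup.map (ZMod.castHom hb (ZMod b)) (k⁻¹ * β * k) = 1 := by
        rw [_root_.map_mul, _root_.map_mul, _root_.map_inv, hβ]
        group
      have harg : (k⁻¹ * β * k)⁻¹ * ((α * k)⁻¹ * g) = k⁻¹ * (γ⁻¹ * g) := by
        rw [hγab]; group
      calc ψ (k⁻¹ * (γ⁻¹ * g)) = ψ ((k⁻¹ * β * k)⁻¹ * ((α * k)⁻¹ * g)) := by rw [harg]
        _ = ψ ((α * k)⁻¹ * g) := hψ.2 _ hδ _
    show (∑ k ∈ kerF q a ha, ψ (k⁻¹ * (γ⁻¹ * g))) = ∑ k ∈ kerF q a ha, ψ (k⁻¹ * g)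
    rw [Finset.sum_congr rfl step1]
    refine Finset.sum_bij' (fun k _ => α * k) (fun k _ => α⁻¹ * k) ?_ ?_ ?_ ?_ ?_
    · intro k hk
      rw [mem_kerF ha] at hk ⊢
      rw [_root_.map_mul, hα, hk, one_mul]
    · intro k hk
      rw [mem_kerF ha] at hk ⊢
      rw [_root_.map_mul, _root_.map_inv, hα, hk, inv_one, one_mul]
    · intro k _; group
    · intro k _; group
    · intro k _; rfl

lemma inner_avg {a : ℕ} (ha : a ∣ q) {φ : SL2Mod q → ℂ} (hφ : φ ∈ EhatSL2 q a ha)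
    (ψ : SL2Mod q → ℂ) :
    innerSL2 q φ (fun g => ∑ k ∈ kerF q a ha, ψ (k⁻¹ * g)) =
      ((kerF q a ha).card : ℂ) * innerSL2 q φ ψ := by
  unfold innerSL2
  simp only [Finset.mul_sum]
  rw [Finset.sum_comm]
  have inner_eq : ∀ k ∈ kerF q a ha,
      (∑ g : SL2Mod q, (starRingEnd ℂ) (φ g) * ψ (k⁻¹ * g)) =
        ∑ g : SL2Mod q, (starRingEnd ℂ) (φ g) * ψ g := by
    intro k hk
    have hφk : ∀ g : SL2Mod q, φ (k * g) = φ g := by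
      intro g
      have h1 : SpecialLinearGroup.map (ZMod.castHom ha (ZMod a)) k⁻¹ = 1 := by
        rw [_root_.map_inv, (mem_kerF ha).mp hk, inv_one]
      have := hφ.2 k⁻¹ h1 g
      rwa [inv_inv] at this
    calc (∑ g : SL2Mod q, (starRingEnd ℂ) (φ g) * ψ (k⁻¹ * g))
        = ∑ g : SL2Mod q, (starRingEnd ℂ) (φ (k * g)) * ψ (k⁻¹ * (k * g)) :=
          (Fintype.sum_equiv (Equiv.mulLeft k) _ _ (fun x => rfl)).symm
      _ = ∑ g : SL2Mod q, (starRingEnd ℂ) (φ g) * ψ g := by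
          refine Finset.sum_congr rfl fun g _ => ?_
          rw [hφk g, inv_mul_cancel_left]
  rw [Finset.sum_congr rfl inner_eq, Finset.sum_const, nsmul_eq_mul, Finset.mul_sum]

end avg

section orth
variable {q : ℕ} [NeZero q]

lemma innerSL2_conj (φ ψ : SL2Mod q → ℂ) :
    innerSL2 q φ ψ = (starRingEnd ℂ) (innerSL2 q ψ φ) := by
  simp [innerSL2, map_sum, mul_comm]

lemma orth_asym (hsf : Squarefree q) {a b : ℕ} (ha : a ∣ q) (hb : b ∣ q) (hnd : ¬ a ∣ b)
    {φ ψ : SL2Mod q → ℂ} (hφ : φ ∈ EnewSL2 q a ha) (hψ : ψ ∈ EhatSL2 q b hb) :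
    innerSL2 q φ ψ = 0 := by
  have hgd : a.gcd b ∣ a := Nat.gcd_dvd_left a b
  have hgne : a.gcd b ≠ a := fun h => hnd (h ▸ Nat.gcd_dvd_right a b)
  have hS := avg_mem hsf ha hb hψ
  have h0 := hφ.2 (a.gcd b) hgd hgne _ hS
  have h1 := inner_avg ha hφ.1 ψ
  rw [h0] at h1
  have hcard : ((kerF q a ha).card : ℂ) ≠ 0 := by
    exact_mod_cast Nat.cast_ne_zero.mpr (kerF_card_ne_zero ha)
  exact (mul_eq_zero.mp h1.symm).resolve_left hcard

lemma part1_lemma (hsf : Squarefree q) (d₁ d₂ : ℕ) (h₁ : d₁ ∣ q) (h₂ : d₂ ∣ q)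
    (hne : d₁ ≠ d₂) {φ ψ : SL2Mod q → ℂ}
    (hφ : φ ∈ EnewSL2 q d₁ h₁) (hψ : ψ ∈ EnewSL2 q d₂ h₂) :
    innerSL2 q φ ψ = 0 := by
  by_cases hd : d₁ ∣ d₂
  · have hnd : ¬ d₂ ∣ d₁ := fun h => hne (Nat.dvd_antisymm hd h)
    rw [innerSL2_conj, orth_asym hsf h₂ h₁ hnd hψ hφ.1, map_zero]
  · exact orth_asym hsf h₁ h₂ hd hφ hψ.1

end orth

section hilbert
variable (q : ℕ) [NeZero q]

local notation "Eu" => EuclideanSpace ℂ (SL2Mod q)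

lemma inner_eq_innerSL2 (φ ψ : Eu) :
    (inner ℂ φ ψ : ℂ) = innerSL2 q φ ψ := by
  rw [PiLp.inner_apply]
  exact Finset.sum_congr rfl fun g _ => RCLike.inner_apply' _ _

noncomputable def ehatSub (d : ℕ) (h : d ∣ q) : Submodule ℂ Eu where
  carrier := {φ : Eu | (φ : SL2Mod q → ℂ) ∈ EhatSL2 q d h}
  add_mem' := by
    rintro f g ⟨hf1, hf2⟩ ⟨hg1, hg2⟩
    constructor
    · show (∑ x : SL2Mod q, (f x + g x)) = 0
      rw [Finset.sum_add_distrib, hf1, hg1, add_zero]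
    · intro γ hγ x
      show f (γ⁻¹ * x) + g (γ⁻¹ * x) = f x + g x
      rw [hf2 γ hγ x, hg2 γ hγ x]
  zero_mem' := by
    constructor
    · simp
    · intro γ hγ x; rfl
  smul_mem' := by
    rintro c f ⟨hf1, hf2⟩
    constructor
    · show (∑ x : SL2Mod q, c * f x) = 0
      rw [← Finset.mul_sum, hf1, mul_zero]
    · intro γ hγ x
      show c * f (γ⁻¹ * x) = c * f x
      rw [hf2 γ hγ x]

noncomputable def eh (d : ℕ) : Submodule ℂ Eu :=
  if h : d ∣ q then ehatSub q d h else ⊥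

lemma mem_eh {d : ℕ} (h : d ∣ q) {φ : Eu} : φ ∈ eh q d ↔ (φ : SL2Mod q → ℂ) ∈ EhatSL2 q d h := by
  rw [eh, dif_pos h]; rfl

lemma eh_mono {d₁ d₂ : ℕ} (h12 : d₁ ∣ d₂) (h2 : d₂ ∣ q) : eh q d₁ ≤ eh q d₂ := by
  intro φ hφ
  rw [mem_eh q (h12.trans h2)] at hφ
  rw [mem_eh q h2]
  refine ⟨hφ.1, fun γ hγ g => ?_⟩
  refine hφ.2 γ ?_ g
  have : ZMod.castHom (h12.trans h2) (ZMod d₁) = (ZMod.castHom h12 (ZMod d₁)).comp (ZMod.castHom h2 (ZMod d₂)) := (ZMod.castHom_comp h12 h2).symm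
  have hcomp : SpecialLinearGroup.map (ZMod.castHom (h12.trans h2) (ZMod d₁)) γ =
      SpecialLinearGroup.map (ZMod.castHom h12 (ZMod d₁))
        (SpecialLinearGroup.map (ZMod.castHom h2 (ZMod d₂)) γ) := by
    ext i j
    show ZMod.castHom (h12.trans h2) (ZMod d₁) (γ i j) = _
    rw [← cast_chain h12 h2 (h12.trans h2) (γ i j)]
    rfl
  rw [hcomp, hγ, _root_.map_one]

lemma eh_one : eh q 1 = ⊥ := by
  ext φ
  rw [mem_eh q (one_dvd q), Submodule.mem_bot]
  constructor
  · rintro ⟨h1, h2⟩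
    haveI : Subsingleton (SL2Mod 1) :=
      ⟨fun x y => Subtype.ext (funext fun i => funext fun j => Subsingleton.elim _ _)⟩
    have hconst : ∀ g : SL2Mod q, φ g = φ 1 := by
      intro g
      have := h2 g (Subsingleton.elim _ _) g
      rw [inv_mul_cancel] at this
      exact this.symm
    have : (∑ g : SL2Mod q, φ g) = ((Finset.univ : Finset (SL2Mod q)).card : ℂ) * φ 1 := by
      rw [Finset.sum_congr rfl (fun g _ => hconst g), Finset.sum_const, nsmul_eq_mul]
    rw [h1] at this
    have hcard : ((Finset.univ : Finset (SL2Mod q)).card : ℂ) ≠ 0 := by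
      exact_mod_cast Nat.cast_ne_zero.mpr (Finset.card_ne_zero_of_mem (Finset.mem_univ 1))
    have hφ1 : φ 1 = 0 := by
      rcases mul_eq_zero.mp this.symm with h | h
      · exact absurd h hcard
      · exact h
    ext g
    rw [hconst g, hφ1]; rfl
  · rintro rfl
    exact ⟨by simp, fun γ hγ x => rfl⟩

end hilbert

section hilbert2
variable (q : ℕ) [NeZero q]

local notation "Eu" => EuclideanSpace ℂ (SL2Mod q)

lemma mem_eh_self {φ : Eu} : φ ∈ eh q q ↔ (∑ g : SL2Mod q, φ g) = 0 := by
  rw [mem_eh q dvd_rfl]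
  constructor
  · exact fun h => h.1
  · intro h
    refine ⟨h, fun γ hγ g => ?_⟩
    have hid : SpecialLinearGroup.map (ZMod.castHom (dvd_refl q) (ZMod q)) γ = γ := by
      ext i j
      show ZMod.castHom (dvd_refl q) (ZMod q) (γ i j) = γ i j
      rw [ZMod.castHom_self]
      rfl
    rw [hid] at hγ
    rw [hγ, inv_one, one_mul]

lemma mem_orth_biSup {P : ℕ → Prop} {K : ℕ → Submodule ℂ Eu} {v : Eu} :
    v ∈ (⨆ d, ⨆ _ : P d, K d)ᗮ ↔ ∀ d, P d → ∀ u ∈ K d, (inner ℂ u v : ℂ) = 0 := by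
  constructor
  · intro hv d hd u hu
    exact (Submodule.mem_orthogonal _ v).mp hv u
      (Submodule.mem_iSup_of_mem d (Submodule.mem_iSup_of_mem hd hu))
  · intro h
    rw [← Submodule.iInf_orthogonal]
    refine (Submodule.mem_iInf _).mpr fun d => ?_
    by_cases hd : P d
    · rw [iSup_pos hd, Submodule.mem_orthogonal]
      exact h d hd
    · rw [iSup_neg hd, Submodule.mem_orthogonal]
      intro u hu
      rw [Submodule.mem_bot] at hu
      rw [hu, inner_zero_left]

noncomputable def en (d : ℕ) : Submodule ℂ Eu :=
  eh q d ⊓ (⨆ d', ⨆ _ : d' ∣ d ∧ d' ≠ d, eh q d')ᗮ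

lemma mem_en {d : ℕ} (h : d ∣ q) {φ : Eu} : φ ∈ en q d ↔ (φ : SL2Mod q → ℂ) ∈ EnewSL2 q d h := by
  rw [en, Submodule.mem_inf, mem_orth_biSup]
  constructor
  · rintro ⟨h1, h2⟩
    refine ⟨(mem_eh q h).mp h1, fun d' h' hne ψ hψ => ?_⟩
    have h0 := h2 d' ⟨h', hne⟩ (WithLp.toLp 2 ψ) ((mem_eh q (h'.trans h) (φ := WithLp.toLp 2 ψ)).mpr hψ)
    exact (inner_eq_innerSL2 q φ (WithLp.toLp 2 ψ)).symm.trans (inner_eq_zero_symm.mpr h0)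
  · rintro ⟨h1, h2⟩
    refine ⟨(mem_eh q h).mpr h1, fun d' hd' ψ hψ => ?_⟩
    have hψ' := (mem_eh q (hd'.1.trans h)).mp hψ
    have h0 := h2 d' hd'.1 hd'.2 ψ hψ'
    rw [← inner_eq_innerSL2] at h0
    exact inner_eq_zero_symm.mp h0

lemma en_eq_bot {d : ℕ} (hd : d ∉ q.divisors.erase 1) : en q d = ⊥ := by
  by_cases h1 : d = 1
  · subst h1
    refine le_bot_iff.mp ?_
    exact le_trans inf_le_left (eh_one q).le
  · have hnd : ¬ d ∣ q := fun hdq =>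
      hd (Finset.mem_erase.mpr ⟨h1, Nat.mem_divisors.mpr ⟨hdq, NeZero.ne q⟩⟩)
    refine le_bot_iff.mp (le_trans inf_le_left ?_)
    rw [eh, dif_neg hnd]

lemma eh_le_sup_en : ∀ d, d ∣ q → eh q d ≤ ⨆ e ∈ d.divisors, en q e := by
  intro d
  induction d using Nat.strong_induction_on with
  | _ d IH =>
    intro hd φ hφ
    have hd0 : d ≠ 0 := by
      rintro rfl
      exact NeZero.ne q (Nat.eq_zero_of_zero_dvd hd)
    set S := ⨆ e ∈ d.properDivisors, eh q e with hS
    obtain ⟨y, hy, z, hz, hyz⟩ := S.exists_add_mem_mem_orthogonal φ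
    have hSle : S ≤ eh q d := by
      refine iSup_le fun e => iSup_le fun he => ?_
      exact eh_mono q (Nat.mem_properDivisors.mp he).1 hd
    have hz_eh : z ∈ eh q d := by
      have hzeq : z = φ - y := by rw [hyz]; abel
      rw [hzeq]
      exact Submodule.sub_mem _ hφ (hSle hy)
    have hz_en : z ∈ en q d := by
      refine Submodule.mem_inf.mpr ⟨hz_eh, ?_⟩
      refine Submodule.orthogonal_le ?_ hz
      refine iSup_le fun e => iSup_le fun hP => ?_
      have he : e ∈ d.properDivisors := Nat.mem_properDivisors.mpr
        ⟨hP.1, lt_of_le_of_ne (Nat.le_of_dvd (Nat.pos_of_ne_zero hd0) hP.1) hP.2⟩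
      exact le_iSup₂ (f := fun e (_ : e ∈ d.properDivisors) => eh q e) e he
    rw [hyz]
    refine Submodule.add_mem _ ?_ ?_
    · have hle : S ≤ ⨆ e ∈ d.divisors, en q e := by
        refine iSup_le fun e => iSup_le fun he => ?_
        have he' := Nat.mem_properDivisors.mp he
        refine le_trans (IH e he'.2 (he'.1.trans hd)) ?_
        refine iSup_le fun e' => iSup_le fun he'' => ?_
        exact le_iSup₂ (f := fun e (_ : e ∈ d.divisors) => en q e) e'
          (Nat.divisors_subset_of_dvd hd0 he'.1 he'')
      exact hle hy
    · exact le_iSup₂ (f := fun e (_ : e ∈ d.divisors) => en q e) d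
        (Nat.mem_divisors_self d hd0) hz_en

end hilbert2

section assemble
variable (q : ℕ) [NeZero q]

local notation "Eu" => EuclideanSpace ℂ (SL2Mod q)

lemma innerSL2_sum {ι : Type*} (s : Finset ι) (φ : SL2Mod q → ℂ) (ψ : ι → (SL2Mod q → ℂ)) :
    innerSL2 q φ (∑ e ∈ s, ψ e) = ∑ e ∈ s, innerSL2 q φ (ψ e) := by
  unfold innerSL2
  rw [Finset.sum_comm]
  refine Finset.sum_congr rfl fun g _ => ?_
  rw [Finset.sum_apply, Finset.mul_sum]

lemma innerSL2_self_eq_zero {φ : SL2Mod q → ℂ} (h : innerSL2 q φ φ = 0) : φ = 0 := by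
  have h' : (inner ℂ (WithLp.toLp 2 φ : Eu) (WithLp.toLp 2 φ) : ℂ) = 0 := by
    rw [inner_eq_innerSL2]; exact h
  have h2 : (WithLp.toLp 2 φ : Eu) = 0 := inner_self_eq_zero.mp h'
  exact congrArg WithLp.ofLp h2

end assemble

/-- For square-free `q`, `L²₀(SL₂(ℤ/qℤ))` decomposes as the orthogonal direct sum
of the new subspaces `E^q_{q'}` over the divisors `q' ≠ 1` of `q`: the pieces are
pairwise orthogonal and every function orthogonal to constants has a unique
decomposition into components from these pieces. -/
theorem L20_orthogonal_decomposition (q : ℕ) [NeZero q] (hsf : Squarefree q) :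
    (∀ (d₁ d₂ : ℕ) (h₁ : d₁ ∣ q) (h₂ : d₂ ∣ q), d₁ ≠ d₂ →
      ∀ φ ∈ EnewSL2 q d₁ h₁, ∀ ψ ∈ EnewSL2 q d₂ h₂, innerSL2 q φ ψ = 0) ∧
    ∀ φ : SL2Mod q → ℂ, (∑ g : SL2Mod q, φ g = 0) →
      ∃! f : ℕ → (SL2Mod q → ℂ),
        (∀ (d : ℕ) (hd : d ∈ q.divisors.erase 1),
          f d ∈ EnewSL2 q d
            (Nat.dvd_of_mem_divisors (Finset.mem_of_mem_erase hd))) ∧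
        (∀ d : ℕ, d ∉ q.divisors.erase 1 → f d = 0) ∧
        φ = ∑ d ∈ q.divisors.erase 1, f d := by

  constructor
  · intro d₁ d₂ h₁ h₂ hne φ hφ ψ hψ
    exact part1_lemma hsf d₁ d₂ h₁ h₂ hne hφ hψ
  · intro φ hφ
    -- uniqueness helper: any two valid families agree
    have uniq : ∀ f₁ f₂ : ℕ → (SL2Mod q → ℂ),
        ((∀ (d : ℕ) (hd : d ∈ q.divisors.erase 1),
          f₁ d ∈ EnewSL2 q d (Nat.dvd_of_mem_divisors (Finset.mem_of_mem_erase hd))) ∧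
         (∀ d : ℕ, d ∉ q.divisors.erase 1 → f₁ d = 0) ∧
         φ = ∑ d ∈ q.divisors.erase 1, f₁ d) →
        ((∀ (d : ℕ) (hd : d ∈ q.divisors.erase 1),
          f₂ d ∈ EnewSL2 q d (Nat.dvd_of_mem_divisors (Finset.mem_of_mem_erase hd))) ∧
         (∀ d : ℕ, d ∉ q.divisors.erase 1 → f₂ d = 0) ∧
         φ = ∑ d ∈ q.divisors.erase 1, f₂ d) → f₁ = f₂ := by
      rintro f₁ f₂ ⟨hm1, hz1, hs1⟩ ⟨hm2, hz2, hs2⟩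
      funext d
      by_cases hd : d ∈ q.divisors.erase 1
      · have hdq : d ∣ q := Nat.dvd_of_mem_divisors (Finset.mem_of_mem_erase hd)
        set δ : ℕ → (SL2Mod q → ℂ) := fun e => f₁ e - f₂ e with hδ
        have hsum0 : (∑ e ∈ q.divisors.erase 1, δ e) = 0 := by
          rw [Finset.sum_sub_distrib, ← hs1, ← hs2, sub_self]
        have hδmem : ∀ (e : ℕ) (he : e ∈ q.divisors.erase 1),
            δ e ∈ EnewSL2 q e (Nat.dvd_of_mem_divisors (Finset.mem_of_mem_erase he)) := by
          intro e he
          have h1 := (mem_en q (Nat.dvd_of_mem_divisors (Finset.mem_of_mem_erase he)) (φ := WithLp.toLp 2 (f₁ e))).mpr (hm1 e he)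
          have h2 := (mem_en q (Nat.dvd_of_mem_divisors (Finset.mem_of_mem_erase he)) (φ := WithLp.toLp 2 (f₂ e))).mpr (hm2 e he)
          exact (mem_en q (Nat.dvd_of_mem_divisors (Finset.mem_of_mem_erase he))).mp
            (Submodule.sub_mem _ h1 h2)
        have hzero : innerSL2 q (δ d) (δ d) = 0 := by
          have h0 : innerSL2 q (δ d) (∑ e ∈ q.divisors.erase 1, δ e) = 0 := by
            rw [hsum0]
            simp [innerSL2]
          rw [innerSL2_sum] at h0
          rw [← h0]
          symm
          rw [Finset.sum_eq_single_of_mem d hd]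
          intro e he hne
          exact part1_lemma hsf d e hdq (Nat.dvd_of_mem_divisors (Finset.mem_of_mem_erase he))
            (Ne.symm hne) (hδmem d hd) (hδmem e he)
        have := innerSL2_self_eq_zero q hzero
        exact sub_eq_zero.mp this
      · rw [hz1 d hd, hz2 d hd]
    -- existence
    have hφ' : (WithLp.toLp 2 φ : EuclideanSpace ℂ (SL2Mod q)) ∈ eh q q := (mem_eh_self q).mpr hφ
    have h2 : (WithLp.toLp 2 φ : EuclideanSpace ℂ (SL2Mod q)) ∈ ⨆ e : ℕ, en q e := by
      refine (le_trans (eh_le_sup_en q q dvd_rfl) ?_) hφ'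
      exact iSup_le fun e => iSup_le fun _ => le_iSup (en q) e
    obtain ⟨F, hF, hFsum⟩ := (Submodule.mem_iSup_iff_exists_finsupp (en q) _).mp h2
    set f : ℕ → (SL2Mod q → ℂ) := fun d => (WithLp.linearEquiv 2 ℂ (SL2Mod q → ℂ)) (F d) with hf
    have hfz : ∀ d, d ∉ q.divisors.erase 1 → f d = 0 := by
      intro d hd
      have := hF d
      rw [en_eq_bot q hd, Submodule.mem_bot] at this
      rw [hf]
      simp only [this, map_zero]
    have hfm : ∀ (d : ℕ) (hd : d ∈ q.divisors.erase 1),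
        f d ∈ EnewSL2 q d (Nat.dvd_of_mem_divisors (Finset.mem_of_mem_erase hd)) := by
      intro d hd
      exact (mem_en q (Nat.dvd_of_mem_divisors (Finset.mem_of_mem_erase hd))).mp (hF d)
    have hfs : φ = ∑ d ∈ q.divisors.erase 1, f d := by
      have hsupp : F.support ⊆ q.divisors.erase 1 := by
        intro d hdsupp
        by_contra hd
        exact Finsupp.mem_support_iff.mp hdsupp
          (by have := hF d; rwa [en_eq_bot q hd, Submodule.mem_bot] at this)
      have : F.sum (fun _ xi => xi) = ∑ d ∈ q.divisors.erase 1, F d :=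
        Finsupp.sum_of_support_subset F hsupp _ (fun i _ => rfl)
      rw [this] at hFsum
      have := congrArg (WithLp.linearEquiv 2 ℂ (SL2Mod q → ℂ)) hFsum
      rw [map_sum] at this
      exact this.symm
    exact ⟨f, ⟨hfm, hfz, hfs⟩, fun g hg => uniq g f hg ⟨hfm, hfz, hfs⟩⟩
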